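/- Let X ⊆ ℝ² be the comb-like space X = ({0} ∪ {1/n : n ∈ ℕ, n ≥ 1}) × [0,1] ∪ [0,1] × {0} ∪ [0,1] × {1}, and let Y be the cone over X, i.e., the quotient of X × [0,1] with X × {1} collapsed to a point. Then Y is simply connected (hence has discrete fundamental group), but Y is not locally path connected. -/

import Mathlib

set_option linter.unnecessarySimpa false


open Topology Filter unitInterval

instance ZerothHomotopy.instTopologicalSpace' (X : Type*) [TopologicalSpace X] :
    TopologicalSpace (ZerothHomotopy X) :=
  inferInstanceAs (TopologicalSpace (Quotient _))

/-- `X` is semilocally simply connected at `p`: some open neighborhood `U` of `p` is such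
that every loop at `p` contained in `U` is null-homotopic (rel endpoints) in `X`. -/
def SemilocallySimplyConnectedAt (X : Type*) [TopologicalSpace X] (p : X) : Prop :=
  ∃ U : Set X, IsOpen U ∧ p ∈ U ∧
    ∀ γ : Path p p, (∀ t, γ t ∈ U) → γ.Homotopic (Path.refl p)

/-- The comb-like space of the paper. -/
def comb : Set (ℝ × ℝ) :=
  (({0} ∪ {x : ℝ | ∃ n : ℕ, 1 ≤ n ∧ x = 1 / n}) ×ˢ Set.Icc 0 1) ∪
    (Set.Icc 0 1 ×ˢ ({0} : Set ℝ)) ∪ (Set.Icc 0 1 ×ˢ ({1} : Set ℝ))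

lemma combP_mem : ((0 : ℝ), (0 : ℝ)) ∈ comb :=
  Or.inl (Or.inr ⟨⟨le_refl _, zero_le_one⟩, rfl⟩)

/-- The basepoint `p = (0,0)` of the comb space. -/
def combP : comb := ⟨(0, 0), combP_mem⟩

/-- The setoid on `comb × [0,1]` identifying all points of `comb × {1}`. -/
def coneSetoid : Setoid (↥comb × unitInterval) where
  r a b := a = b ∨ (a.2 = 1 ∧ b.2 = 1)
  iseqv := by
    refine ⟨fun a => Or.inl rfl, ?_, ?_⟩
    · rintro a b (rfl | ⟨h1, h2⟩)
      · exact Or.inl rfl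
      · exact Or.inr ⟨h2, h1⟩
    · rintro a b c (rfl | ⟨h1, h2⟩) (rfl | ⟨h3, h4⟩)
      · exact Or.inl rfl
      · exact Or.inr ⟨h3, h4⟩
      · exact Or.inr ⟨h1, h2⟩
      · exact Or.inr ⟨h1, h4⟩

/-- The cone over the comb space: `(comb × [0,1]) / (comb × {1})`. -/
def ConeComb := Quotient coneSetoid

instance : TopologicalSpace ConeComb :=
  inferInstanceAs (TopologicalSpace (Quotient coneSetoid))


/-! ### Auxiliary material -/

namespace ConeCombProof

/-- The quotient map onto the cone. -/
def cq (a : ↥comb × unitInterval) : ConeComb := Quotient.mk coneSetoid a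

lemma continuous_cq : Continuous cq := continuous_quot_mk

lemma isQuotientMap_cq : IsQuotientMap cq := by
  letI := coneSetoid
  exact isQuotientMap_quotient_mk'

lemma comb_fst_nonneg {x : ℝ × ℝ} (hx : x ∈ comb) : 0 ≤ x.1 := by
  rcases hx with (h | h) | h
  · rcases h.1 with h1 | ⟨n, hn, h1⟩
    · exact le_of_eq h1.symm
    · rw [h1]; positivity
  · exact h.1.1
  · exact h.1.1

/-- The apex of the cone. -/
def apex : ConeComb := cq (combP, 1)

lemma cq_one (x : ↥comb) : cq (x, 1) = apex :=
  Quotient.sound (Or.inr ⟨rfl, rfl⟩)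

/-- max on the unit interval. -/
def maxI (s t : unitInterval) : unitInterval :=
  ⟨max (s : ℝ) t, ⟨le_max_of_le_left s.2.1, max_le s.2.2 t.2.2⟩⟩

lemma continuous_maxI : Continuous (fun p : unitInterval × unitInterval => maxI p.1 p.2) :=
  Continuous.subtype_mk ((continuous_subtype_val.comp continuous_fst).max
    (continuous_subtype_val.comp continuous_snd)) _

@[simp] lemma maxI_zero (s : unitInterval) : maxI s 0 = s :=
  Subtype.ext (max_eq_left s.2.1)

@[simp] lemma maxI_one (s : unitInterval) : maxI s 1 = 1 :=
  Subtype.ext (max_eq_right s.2.2)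

@[simp] lemma one_maxI (s : unitInterval) : maxI 1 s = 1 :=
  Subtype.ext (max_eq_left s.2.2)

/-- The contraction, before quotienting. -/
def contrK : C((↥comb × unitInterval) × unitInterval, ConeComb) :=
  ⟨fun p => cq (p.1.1, maxI p.1.2 p.2),
    continuous_cq.comp ((continuous_fst.fst).prodMk
      (continuous_maxI.comp ((continuous_fst.snd).prodMk continuous_snd)))⟩

lemma contrK_resp : ∀ a b : ↥comb × unitInterval, coneSetoid.r a b →
    contrK.curry a = contrK.curry b := by
  rintro a b (rfl | ⟨h1, h2⟩)
  · rfl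
  · ext t
    simp only [ContinuousMap.curry_apply, contrK, ContinuousMap.coe_mk]
    rw [h1, h2, one_maxI]
    exact (cq_one _).trans (cq_one _).symm

/-- The contraction as a map `ConeComb → C(I, ConeComb)`. -/
def contrLift : ConeComb → C(unitInterval, ConeComb) :=
  Quotient.lift (fun k => contrK.curry k) contrK_resp

lemma continuous_contrLift : Continuous contrLift :=
  Continuous.quotient_lift (contrK.curry).continuous _

/-- Homotopy from the identity to the constant map at the apex. -/
noncomputable def contrHomotopy :
    ContinuousMap.Homotopy (ContinuousMap.id ConeComb) (ContinuousMap.const ConeComb apex) where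
  toFun p := contrLift p.2 p.1
  continuous_toFun := by
    have h : Continuous (fun p : unitInterval × ConeComb =>
        (ContinuousMap.uncurry ⟨contrLift, continuous_contrLift⟩) (p.2, p.1)) :=
      (ContinuousMap.uncurry ⟨contrLift, continuous_contrLift⟩).continuous.comp
        (continuous_snd.prodMk continuous_fst)
    exact h
  map_zero_left x := by
    induction x using Quotient.ind with
    | _ k =>
      show contrK.curry k 0 = _
      simp only [ContinuousMap.curry_apply, contrK, ContinuousMap.coe_mk, maxI_zero,
        ContinuousMap.id_apply]
      rfl
  map_one_left x := by
    induction x using Quotient.ind with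
    | _ k =>
      show contrK.curry k 1 = _
      simp only [ContinuousMap.curry_apply, contrK, ContinuousMap.coe_mk, maxI_one,
        ContinuousMap.const_apply]
      exact cq_one _

instance : ContractibleSpace ConeComb := by
  rw [contractible_iff_id_nullhomotopic]
  exact ⟨apex, ⟨contrHomotopy⟩⟩

instance : SimplyConnectedSpace ConeComb := inferInstance

/-! ### Homotopic loops are joined in the loop space -/

lemma joined_of_homotopic {X : Type*} [TopologicalSpace X] {x y : X} {γ₁ γ₂ : Path x y}
    (h : γ₁.Homotopic γ₂) : Joined γ₁ γ₂ := by
  obtain ⟨F⟩ := h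
  let P : unitInterval → Path x y := fun t =>
    { toContinuousMap := F.toHomotopy.toContinuousMap.curry t
      source' := by
        simpa using F.eq_fst t (show (0 : unitInterval) ∈ ({0, 1} : Set unitInterval)
          from Or.inl rfl)
      target' := by
        simpa using F.eq_fst t (show (1 : unitInterval) ∈ ({0, 1} : Set unitInterval)
          from Or.inr rfl) }
  refine ⟨{ toFun := P
            continuous_toFun := ?_
            source' := ?_
            target' := ?_ }⟩
  · exact continuous_induced_rng.2 F.toHomotopy.toContinuousMap.curry.continuous
  · ext s
    show F (0, s) = γ₁ s
    simp
  · ext s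
    show F (1, s) = γ₂ s
    simp

lemma subsingleton_zerothHomotopy_loops {X : Type*} [TopologicalSpace X]
    [SimplyConnectedSpace X] (y : X) : Subsingleton (ZerothHomotopy (Path y y)) := by
  constructor
  intro a b
  induction a using Quotient.ind with
  | _ p =>
  induction b using Quotient.ind with
  | _ q =>
    exact Quotient.sound (joined_of_homotopic (SimplyConnectedSpace.paths_homotopic p q))

/-! ### Failure of local path connectedness -/

/-- The point `(0, 1/2)` on the comb. -/
noncomputable def x₀ : ↥comb :=
  ⟨(0, 1/2), Or.inl (Or.inl ⟨Or.inl rfl, by norm_num, by norm_num⟩)⟩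

noncomputable def y₀ : ConeComb := cq (x₀, 0)

/-- A point on the `1/(n+1)` tooth. -/
noncomputable def toothPt (n : ℕ) : ↥comb :=
  ⟨(1/((n : ℝ)+1), 1/2), Or.inl (Or.inl ⟨Or.inr ⟨n+1, by simp, by push_cast; ring⟩,
    by norm_num, by norm_num⟩)⟩

/-- The predicate cutting out the bad open neighborhood. -/
def pp (k : ↥comb × unitInterval) : Prop :=
  k.1.1.1 < 1/4 ∧ 1/4 < k.1.1.2 ∧ k.1.1.2 < 3/4 ∧ (k.2 : ℝ) < 1/2

lemma pp_resp : ∀ a b : ↥comb × unitInterval, coneSetoid.r a b → pp a = pp b := by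
  rintro a b (rfl | ⟨h1, h2⟩)
  · rfl
  · apply propext
    constructor <;> intro h <;> exfalso
    · have := h.2.2.2; rw [h1] at this; norm_num at this
    · have := h.2.2.2; rw [h2] at this; norm_num at this

def U : Set ConeComb := fun z => Quotient.lift pp pp_resp z

lemma isOpen_U : IsOpen U := by
  rw [← isQuotientMap_cq.isOpen_preimage]
  have heq : cq ⁻¹' U = {k : ↥comb × unitInterval | pp k} := rfl
  rw [heq]
  have c1 : Continuous (fun k : ↥comb × unitInterval => (k.1 : ℝ × ℝ).1) :=
    continuous_fst.comp (continuous_subtype_val.comp continuous_fst)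
  have c2 : Continuous (fun k : ↥comb × unitInterval => (k.1 : ℝ × ℝ).2) :=
    continuous_snd.comp (continuous_subtype_val.comp continuous_fst)
  have c3 : Continuous (fun k : ↥comb × unitInterval => (k.2 : ℝ)) :=
    continuous_subtype_val.comp continuous_snd
  exact ((isOpen_lt c1 continuous_const).inter ((isOpen_lt continuous_const c2).inter
    ((isOpen_lt c2 continuous_const).inter (isOpen_lt c3 continuous_const))))

lemma y₀_mem_U : y₀ ∈ U := by
  show pp (x₀, 0)
  refine ⟨by norm_num [x₀], by norm_num [x₀], by norm_num [x₀], by norm_num⟩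

/-- A continuous function extracting (a truncation of) the first coordinate. -/
noncomputable def hmap : ConeComb → ℝ :=
  Quotient.lift (fun k : ↥comb × unitInterval => min (k.1 : ℝ × ℝ).1 (1 - (k.2 : ℝ)))
    (by
      rintro a b (rfl | ⟨h1, h2⟩)
      · rfl
      · have ha := comb_fst_nonneg a.1.2
        have hb := comb_fst_nonneg b.1.2
        show min (a.1 : ℝ × ℝ).1 (1 - (a.2 : ℝ)) = min (b.1 : ℝ × ℝ).1 (1 - (b.2 : ℝ))
        rw [h1, h2]
        simp only [Set.Icc.coe_one, sub_self]
        rw [min_eq_right ha, min_eq_right hb])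

lemma continuous_hmap : Continuous hmap :=
  Continuous.quotient_lift
    (((continuous_fst.comp (continuous_subtype_val.comp continuous_fst)).min
      (continuous_const.sub (continuous_subtype_val.comp continuous_snd)))) _

/-- The target totally-disconnected set. -/
def teeth : Set ℝ := insert 0 {x : ℝ | ∃ n : ℕ, 1 ≤ n ∧ x = 1 / n}

lemma hmap_mem_teeth {z : ConeComb} (hz : z ∈ U) : hmap z ∈ teeth := by
  induction z using Quotient.ind with
  | _ k =>
    have hk : pp k := hz
    have h1 : hmap (Quotient.mk coneSetoid k) = (k.1 : ℝ × ℝ).1 := by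
      show min (k.1 : ℝ × ℝ).1 (1 - (k.2 : ℝ)) = (k.1 : ℝ × ℝ).1
      apply min_eq_left
      have h2 := hk.2.2.2
      have h3 := hk.1
      linarith
    rw [h1]
    rcases k.1.2 with (h | h) | h
    · rcases h.1 with h' | h'
      · exact Or.inl h'
      · exact Or.inr h'
    · exfalso; have h2 := h.2; simp only [Set.mem_singleton_iff] at h2
      have := hk.2.1; rw [h2] at this; norm_num at this
    · exfalso; have h2 := h.2; simp only [Set.mem_singleton_iff] at h2
      have := hk.2.2.1; rw [h2] at this; norm_num at this

lemma hmap_y₀ : hmap y₀ = 0 := by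
  show min ((x₀ : ℝ × ℝ)).1 (1 - ((0 : unitInterval) : ℝ)) = 0
  norm_num [x₀]

lemma hmap_tooth (n : ℕ) : hmap (cq (toothPt n, 0)) = 1/((n : ℝ)+1) := by
  show min ((toothPt n : ℝ × ℝ)).1 (1 - ((0 : unitInterval) : ℝ)) = 1/((n : ℝ)+1)
  simp only [toothPt, Set.Icc.coe_zero, sub_zero]
  apply min_eq_left
  rw [div_le_one (by positivity)]
  linarith [Nat.cast_nonneg (α := ℝ) n]

theorem not_locPathConnected : ¬ LocPathConnectedSpace ConeComb := by
  intro hl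
  obtain ⟨V, ⟨hVnhds, hVpc⟩, hVU⟩ :=
    (@path_connected_basis _ _ hl y₀).mem_iff.mp (isOpen_U.mem_nhds y₀_mem_U)
  -- points on the teeth converge to `y₀`
  have htend : Tendsto (fun n : ℕ => cq (toothPt n, (0 : unitInterval))) atTop (𝓝 y₀) := by
    apply (continuous_cq.tendsto _).comp
    apply Tendsto.prodMk_nhds _ tendsto_const_nhds
    rw [tendsto_subtype_rng]
    exact Tendsto.prodMk_nhds tendsto_one_div_add_atTop_nhds_zero_nat tendsto_const_nhds
  obtain ⟨n, hn⟩ := (htend.eventually (eventually_mem_nhds_iff.mpr hVnhds)).exists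
  have hnV : cq (toothPt n, 0) ∈ V := mem_of_mem_nhds hn
  -- a path inside V from the tooth point to y₀
  obtain ⟨γ, hγ⟩ := hVpc.joinedIn _ hnV _ (mem_of_mem_nhds hVnhds)
  set f : unitInterval → ℝ := fun t => hmap (γ t) with hf
  have hfc : Continuous f := continuous_hmap.comp γ.continuous
  have hR : IsPreconnected (Set.range f) := isPreconnected_range hfc
  have hsub : Set.range f ⊆ teeth := by
    rintro - ⟨t, rfl⟩
    exact hmap_mem_teeth (hVU (hγ t))
  have h0 : (0 : ℝ) ∈ Set.range f := ⟨1, by simp [hf, hmap_y₀]⟩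
  have h1 : 1/((n : ℝ)+1) ∈ Set.range f := ⟨0, by simp [hf, hmap_tooth]⟩
  -- the midpoint between 1/(n+2) and 1/(n+1)
  set c : ℝ := (1/((n : ℝ)+2) + 1/((n : ℝ)+1))/2 with hc
  have hn1 : (0 : ℝ) < (n : ℝ) + 1 := by positivity
  have hn2 : (0 : ℝ) < (n : ℝ) + 2 := by positivity
  have hlt : 1/((n : ℝ)+2) < 1/((n : ℝ)+1) := by
    apply one_div_lt_one_div_of_lt hn1; linarith
  have hclt : c < 1/((n : ℝ)+1) := by rw [hc]; linarith
  have hcgt : 1/((n : ℝ)+2) < c := by rw [hc]; linarith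
  have hcpos : (0 : ℝ) < c := lt_trans (by positivity) hcgt
  have hcR : c ∈ Set.range f := hR.ordConnected.out h0 h1 ⟨le_of_lt hcpos, le_of_lt hclt⟩
  rcases Set.mem_insert_iff.mp (hsub hcR) with h | ⟨m, hm, hmeq⟩
  · exact absurd h (ne_of_gt hcpos)
  · rw [hmeq] at hclt hcgt
    have hmpos : (0 : ℝ) < m := by exact_mod_cast hm
    have hlt1 : ((n : ℝ) + 1) < m := by
      have := (div_lt_div_iff₀ hmpos hn1).mp hclt
      linarith
    have hlt2 : (m : ℝ) < (n : ℝ) + 2 := by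
      have := (div_lt_div_iff₀ hn2 hmpos).mp hcgt
      linarith
    have hA : n + 1 < m := by exact_mod_cast hlt1
    have hB : m < n + 2 := by exact_mod_cast hlt2
    omega

end ConeCombProof

theorem stmt11 : SimplyConnectedSpace ConeComb ∧
    (∀ y : ConeComb, DiscreteTopology (ZerothHomotopy (Path y y))) ∧
    ¬ LocPathConnectedSpace ConeComb := by
  refine ⟨inferInstance, fun y => ?_, ConeCombProof.not_locPathConnected⟩
  haveI := ConeCombProof.subsingleton_zerothHomotopy_loops y
  infer_instance
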